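/- Consider a single-state MDP with three actions a₁,a₂,a₃ and horizon H = 1, so a reward is a vector r ∈ ℝ³ and a deterministic policy is a choice of action. Define the planning loss L(r, r') = max_a r'(a) - min_{a ∈ argmax r} r'(a). Let R = {r, r'} with r = (1, 0, 0.5) and r' = (0, 1, 0.5). Then min over rewards r'' of max_{q ∈ R} L(r'', q) equals 0.5, attained by any r'' whose unique maximizer is a₃, while max_{p,q ∈ R} L(p, q) = 1. In particular the Chebyshev center of R under L lies outside R. -/

import Mathlib

/-- The set of maximizing actions of a reward vector. -/
def argmaxSet (r : Fin 3 → ℝ) : Set (Fin 3) := {a | ∀ b, r b ≤ r a}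

/-- Planning loss: best value of `r'` minus the worst value under `r'` of an optimal
action for `r`. -/
noncomputable def Lpl (r r' : Fin 3 → ℝ) : ℝ :=
  sSup (Set.range r') - sInf (r' '' argmaxSet r)

lemma bdd_img (f : Fin 3 → ℝ) (A : Set (Fin 3)) : BddBelow (f '' A) :=
  ((Set.finite_range f).bddBelow).mono (Set.image_subset_range f A)

lemma argmax_nonempty (f : Fin 3 → ℝ) : ∃ a, a ∈ argmaxSet f :=
  Finite.exists_max f

lemma sup_r : sSup (Set.range ![1, 0, (0.5:ℝ)]) = 1 := by
  apply IsGreatest.csSup_eq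
  refine ⟨⟨0, rfl⟩, ?_⟩
  rintro x ⟨i, rfl⟩; fin_cases i <;> norm_num

lemma sup_r' : sSup (Set.range ![0, 1, (0.5:ℝ)]) = 1 := by
  apply IsGreatest.csSup_eq
  refine ⟨⟨1, rfl⟩, ?_⟩
  rintro x ⟨i, rfl⟩; fin_cases i <;> norm_num

lemma argmax_r : argmaxSet ![1, 0, (0.5:ℝ)] = {0} := by
  ext a
  simp only [argmaxSet, Set.mem_setOf_eq, Set.mem_singleton_iff]
  fin_cases a
  · simp only [Fin.zero_eta]
    refine iff_of_true (fun b => ?_) (by trivial)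
    fin_cases b <;> norm_num
  · refine iff_of_false (fun h => ?_) (by decide)
    have := h 0; norm_num at this
  · refine iff_of_false (fun h => ?_) (by decide)
    have := h 0; norm_num at this

lemma argmax_r' : argmaxSet ![0, 1, (0.5:ℝ)] = {1} := by
  ext a
  simp only [argmaxSet, Set.mem_setOf_eq, Set.mem_singleton_iff]
  fin_cases a
  · refine iff_of_false (fun h => ?_) (by decide)
    have := h 1; norm_num at this
  · refine iff_of_true (fun b => ?_) (by trivial)
    fin_cases b <;> norm_num
  · refine iff_of_false (fun h => ?_) (by decide)
    have := h 1; norm_num at this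

theorem stmt_5 (r r' : Fin 3 → ℝ)
    (hr : r = ![1, 0, 0.5]) (hr' : r' = ![0, 1, 0.5]) :
    (∀ r'' : Fin 3 → ℝ, (0.5 : ℝ) ≤ max (Lpl r'' r) (Lpl r'' r')) ∧
    (∀ r'' : Fin 3 → ℝ, argmaxSet r'' = {2} →
        max (Lpl r'' r) (Lpl r'' r') = 0.5) ∧
    sSup ((fun p : (Fin 3 → ℝ) × (Fin 3 → ℝ) => Lpl p.1 p.2) ''
        (({r, r'} : Set (Fin 3 → ℝ)) ×ˢ ({r, r'} : Set (Fin 3 → ℝ)))) = 1 ∧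
    (∀ c ∈ ({r, r'} : Set (Fin 3 → ℝ)), (0.5 : ℝ) < max (Lpl c r) (Lpl c r')) := by
  subst hr hr'
  set r : Fin 3 → ℝ := ![1, 0, 0.5] with hrdef
  set r' : Fin 3 → ℝ := ![0, 1, 0.5] with hr'def
  -- key computed Lpl values
  have hLrr : Lpl r r = 0 := by
    rw [Lpl, sup_r, argmax_r, Set.image_singleton, csInf_singleton]
    norm_num [hrdef]
  have hLrr' : Lpl r r' = 1 := by
    rw [Lpl, sup_r', argmax_r, Set.image_singleton, csInf_singleton]
    norm_num [hr'def]
  have hLr'r : Lpl r' r = 1 := by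
    rw [Lpl, sup_r, argmax_r', Set.image_singleton, csInf_singleton]
    norm_num [hrdef]
  have hLr'r' : Lpl r' r' = 0 := by
    rw [Lpl, sup_r', argmax_r', Set.image_singleton, csInf_singleton]
    norm_num [hr'def]
  refine ⟨?_, ?_, ?_, ?_⟩
  · intro r''
    obtain ⟨a, ha⟩ := argmax_nonempty r''
    have h1 : sInf (r '' argmaxSet r'') ≤ r a :=
      csInf_le (bdd_img r _) (Set.mem_image_of_mem r ha)
    have h2 : sInf (r' '' argmaxSet r'') ≤ r' a :=
      csInf_le (bdd_img r' _) (Set.mem_image_of_mem r' ha)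
    have e1 : 1 - r a ≤ Lpl r'' r := by rw [Lpl, sup_r]; linarith
    have e2 : 1 - r' a ≤ Lpl r'' r' := by rw [Lpl, sup_r']; linarith
    fin_cases a
    · refine le_trans ?_ (le_max_right _ _)
      refine le_trans ?_ e2
      norm_num [hr'def]
    · refine le_trans ?_ (le_max_left _ _)
      refine le_trans ?_ e1
      norm_num [hrdef]
    · refine le_trans ?_ (le_max_left _ _)
      refine le_trans ?_ e1
      norm_num [hrdef]
  · intro r'' h
    have h1 : Lpl r'' r = 0.5 := by
      rw [Lpl, sup_r, h, Set.image_singleton, csInf_singleton]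
      norm_num [hrdef]
      exact (by norm_num : (1:ℝ) - 1/2 = 1/2)
    have h2 : Lpl r'' r' = 0.5 := by
      rw [Lpl, sup_r', h, Set.image_singleton, csInf_singleton]
      norm_num [hr'def]
      exact (by norm_num : (1:ℝ) - 1/2 = 1/2)
    rw [h1, h2, max_self]
  · apply IsGreatest.csSup_eq
    constructor
    · exact ⟨(r, r'), ⟨Set.mem_insert _ _, Set.mem_insert_of_mem _ rfl⟩, hLrr'⟩
    · rintro x ⟨⟨p, q⟩, ⟨hp, hq⟩, rfl⟩
      simp only [Set.mem_insert_iff, Set.mem_singleton_iff] at hp hq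
      rcases hp with rfl | rfl <;> rcases hq with rfl | rfl <;>
        simp [hLrr, hLrr', hLr'r, hLr'r']
  · rintro c (rfl | rfl)
    · rw [hLrr, hLrr']; norm_num
    · rw [hLr'r, hLr'r']; norm_num
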